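/- Let n be odd and let G = G(n;S) be an integral circulant graph on n vertices with adjacency matrix A. Then there do not exist vertices a, b with 0 ≤ a < b ≤ n−1 and a real t > 0 such that |⟨a| e^{iAt} |b⟩| = 1. In other words, an integral circulant graph with an odd number of vertices does not admit perfect state transfer. -/

import Mathlib

open Complex Real
set_option linter.unusedSectionVars false

section aux
variable (n : ℕ) [NeZero n]

noncomputable def pst_ω : ℂ := Complex.exp (2 * ↑π * I / n)

lemma pst_prim : IsPrimitiveRoot (pst_ω n) n := Complex.isPrimitiveRoot_exp n (NeZero.ne n)

noncomputable def pst_e (j : ZMod n) : ℂ := pst_ω n ^ j.val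

lemma pst_pow_mod (x : ℕ) : pst_ω n ^ (x % n) = pst_ω n ^ x := by
  conv_rhs => rw [← Nat.div_add_mod x n]
  rw [pow_add, pow_mul, (pst_prim n).pow_eq_one, one_pow, one_mul]

lemma pst_e_add (j k : ZMod n) : pst_e n (j + k) = pst_e n j * pst_e n k := by
  rw [pst_e, pst_e, pst_e, ZMod.val_add, pst_pow_mod, pow_add]

lemma pst_e_zero : pst_e n 0 = 1 := by simp [pst_e]

lemma pst_e_ne_zero (j : ZMod n) : pst_e n j ≠ 0 :=
  pow_ne_zero _ (Complex.exp_ne_zero _)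

lemma pst_e_abs (j : ZMod n) : ‖pst_e n j‖ = 1 := by
  rw [pst_e, norm_pow]
  have h : (2 * ↑π * I / n : ℂ) = ((2 * π / n : ℝ) : ℂ) * I := by push_cast; ring
  rw [pst_ω, h, Complex.norm_exp]
  simp [Complex.mul_re]

lemma pst_e_eq_one_iff (j : ZMod n) : pst_e n j = 1 ↔ j = 0 := by
  rw [pst_e, (pst_prim n).pow_eq_one_iff_dvd]
  constructor
  · intro h
    exact (ZMod.val_eq_zero j).mp (Nat.eq_zero_of_dvd_of_lt h (ZMod.val_lt j))
  · rintro rfl; simp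

end aux

section aux2
variable (n : ℕ) [NeZero n]

lemma pst_char_sum {c : ZMod n} (hc : c ≠ 0) : ∑ j : ZMod n, pst_e n (j * c) = 0 := by
  have h1 : pst_e n c ≠ 1 := fun h => hc ((pst_e_eq_one_iff n c).mp h)
  have h2 : pst_e n c * ∑ j : ZMod n, pst_e n (j * c) = ∑ j : ZMod n, pst_e n (j * c) := by
    rw [Finset.mul_sum]
    refine Fintype.sum_equiv (Equiv.addRight 1) _ _ (fun x => ?_)
    rw [Equiv.coe_addRight, add_mul, one_mul, pst_e_add, mul_comm]
  have h3 : (pst_e n c - 1) * ∑ j : ZMod n, pst_e n (j * c) = 0 := by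
    rw [sub_mul, one_mul, h2, sub_self]
  rcases mul_eq_zero.mp h3 with h | h
  · exact absurd (sub_eq_zero.mp h) h1
  · exact h

noncomputable def pst_F : Matrix (ZMod n) (ZMod n) ℂ := fun j k => pst_e n (j * k)

noncomputable def pst_B : Matrix (ZMod n) (ZMod n) ℂ :=
  (n : ℂ)⁻¹ • (fun j k => pst_e n (-(j * k)))

lemma pst_key_sum (c : ZMod n) :
    ∑ j : ZMod n, pst_e n (j * c) = if c = 0 then (n : ℂ) else 0 := by
  split_ifs with h
  · subst h; simp [pst_e_zero, ZMod.card]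
  · exact pst_char_sum n h

lemma pst_FB : pst_F n * pst_B n = 1 := by
  ext a b
  rw [Matrix.mul_apply, Matrix.one_apply]
  simp only [pst_F, pst_B, Matrix.smul_apply, Pi.smul_apply, smul_eq_mul]
  have : ∀ j : ZMod n, pst_e n (a * j) * ((n : ℂ)⁻¹ * pst_e n (-(j * b)))
      = (n : ℂ)⁻¹ * pst_e n (j * (a - b)) := by
    intro j
    rw [mul_left_comm, ← pst_e_add]
    congr 2
    ring
  rw [Finset.sum_congr rfl (fun j _ => this j), ← Finset.mul_sum, pst_key_sum]
  have hn : (n : ℂ) ≠ 0 := Nat.cast_ne_zero.mpr (NeZero.ne n)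
  by_cases hab : a = b
  · rw [if_pos (by rw [hab, sub_self]), if_pos hab, inv_mul_cancel₀ hn]
  · rw [if_neg (fun hh => hab (sub_eq_zero.mp hh)), if_neg hab, mul_zero]

lemma pst_BF : pst_B n * pst_F n = 1 := by
  ext a b
  rw [Matrix.mul_apply, Matrix.one_apply]
  simp only [pst_F, pst_B, Matrix.smul_apply, Pi.smul_apply, smul_eq_mul]
  have : ∀ j : ZMod n, (n : ℂ)⁻¹ * pst_e n (-(a * j)) * pst_e n (j * b)
      = (n : ℂ)⁻¹ * pst_e n (j * (b - a)) := by
    intro j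
    rw [mul_assoc, ← pst_e_add]
    congr 2
    ring
  rw [Finset.sum_congr rfl (fun j _ => this j), ← Finset.mul_sum, pst_key_sum]
  have hn : (n : ℂ) ≠ 0 := Nat.cast_ne_zero.mpr (NeZero.ne n)
  by_cases hab : a = b
  · rw [if_pos (by rw [hab, sub_self]), if_pos hab, inv_mul_cancel₀ hn]
  · rw [if_neg (fun hh => hab (sub_eq_zero.mp hh).symm), if_neg hab, mul_zero]

end aux2

section aux3
variable (n : ℕ) [NeZero n]

lemma pst_e_mul_cast {s : ℕ} (hs : s < n) (j : ZMod n) :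
    pst_e n (j * (s : ZMod n)) = pst_ω n ^ (j.val * s) := by
  rw [pst_e, ZMod.val_mul, ZMod.val_natCast, Nat.mod_eq_of_lt hs, pst_pow_mod]

lemma pst_cast_sub {s : ℕ} (hs : s ≤ n) : ((n - s : ℕ) : ZMod n) = -(s : ZMod n) := by
  rw [Nat.cast_sub hs, ZMod.natCast_self, zero_sub]

noncomputable def pst_lam (S : Finset ℕ) (j : ZMod n) : ℂ :=
  ∑ s ∈ S, pst_e n (-(j * (s : ZMod n)))

lemma pst_flip (S : Finset ℕ) (hS1 : ∀ s ∈ S, 1 ≤ s ∧ s ≤ n - 1)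
    (hS2 : ∀ s ∈ S, n - s ∈ S) (j : ZMod n) :
    ∑ s ∈ S, pst_e n (-(j * (s : ZMod n))) = ∑ s ∈ S, pst_e n (j * (s : ZMod n)) := by
  have hn : 1 ≤ n := Nat.one_le_iff_ne_zero.mpr (NeZero.ne n)
  have hle : ∀ s ∈ S, s ≤ n := fun s hs => le_trans (hS1 s hs).2 (Nat.sub_le n 1)
  refine Finset.sum_nbij' (fun s => n - s) (fun s => n - s) (fun s hs => hS2 s hs)
    (fun s hs => hS2 s hs) (fun s hs => ?_) (fun s hs => ?_) (fun s hs => ?_)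
  · have := hS1 s hs; omega
  · have := hS1 s hs; omega
  · rw [pst_cast_sub n (hle s hs)]
    congr 1
    ring

lemma pst_diag (S : Finset ℕ) (hS1 : ∀ s ∈ S, 1 ≤ s ∧ s ≤ n - 1)
    (A : Matrix (ZMod n) (ZMod n) ℂ)
    (hA : ∀ u v : ZMod n, A u v = if (u - v).val ∈ S then 1 else 0) :
    A * pst_F n = pst_F n * Matrix.diagonal (pst_lam n S) := by
  have hn : 1 ≤ n := Nat.one_le_iff_ne_zero.mpr (NeZero.ne n)
  have hlt : ∀ s ∈ S, s < n := fun s hs => lt_of_le_of_lt (hS1 s hs).2 (by omega)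
  ext u j
  rw [Matrix.mul_apply, Matrix.mul_diagonal]
  simp only [hA, pst_F, ite_mul, one_mul, zero_mul]
  rw [← Finset.sum_filter]
  have hb : ∑ v ∈ Finset.univ.filter (fun v : ZMod n => (u - v).val ∈ S),
      pst_e n (v * j) = ∑ s ∈ S, pst_e n ((u - (s : ZMod n)) * j) := by
    refine Finset.sum_nbij' (fun v => (u - v).val) (fun s => u - (s : ZMod n))
      (fun v hv => (Finset.mem_filter.mp hv).2) (fun s hs => ?_) (fun v hv => ?_)
      (fun s hs => ?_) (fun v hv => ?_)
    · rw [Finset.mem_filter]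
      refine ⟨Finset.mem_univ _, ?_⟩
      rw [sub_sub_cancel, ZMod.val_natCast, Nat.mod_eq_of_lt (hlt s hs)]
      exact hs
    · rw [ZMod.natCast_rightInverse (u - v), sub_sub_cancel]
    · rw [sub_sub_cancel, ZMod.val_natCast, Nat.mod_eq_of_lt (hlt s hs)]
    · rw [ZMod.natCast_rightInverse (u - v), sub_sub_cancel]
  rw [hb]
  have : ∀ s ∈ S, pst_e n ((u - (s : ZMod n)) * j)
      = pst_e n (u * j) * pst_e n (-(j * (s : ZMod n))) := by
    intro s _
    rw [← pst_e_add]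
    congr 1
    ring
  rw [Finset.sum_congr rfl this, ← Finset.mul_sum, pst_lam]

noncomputable def pst_U : (Matrix (ZMod n) (ZMod n) ℂ)ˣ :=
  ⟨pst_F n, pst_B n, pst_FB n, pst_BF n⟩

lemma pst_exp_entry (S : Finset ℕ) (hS1 : ∀ s ∈ S, 1 ≤ s ∧ s ≤ n - 1)
    (A : Matrix (ZMod n) (ZMod n) ℂ)
    (hA : ∀ u v : ZMod n, A u v = if (u - v).val ∈ S then 1 else 0)
    (t : ℝ) (a b : ZMod n) :
    NormedSpace.exp ((I * (t : ℂ)) • A) a b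
      = (n : ℂ)⁻¹ * ∑ j : ZMod n,
          Complex.exp (I * t * pst_lam n S j) * pst_e n (j * (a - b)) := by
  have hA2 : A = pst_F n * Matrix.diagonal (pst_lam n S) * pst_B n := by
    calc A = A * (pst_F n * pst_B n) := by rw [pst_FB, mul_one]
    _ = (A * pst_F n) * pst_B n := by rw [mul_assoc]
    _ = pst_F n * Matrix.diagonal (pst_lam n S) * pst_B n := by
        rw [pst_diag n S hS1 A hA]
  have hsmul : (I * (t : ℂ)) • A
      = pst_F n * Matrix.diagonal (fun j => I * (t : ℂ) * pst_lam n S j) * pst_B n := by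
    have hd : (Matrix.diagonal fun j => I * (t : ℂ) * pst_lam n S j)
        = (I * (t : ℂ)) • Matrix.diagonal (pst_lam n S) := by
      rw [← Matrix.diagonal_smul]
      congr 1
    rw [hA2, hd, Matrix.mul_smul, Matrix.smul_mul]
  have hconj : NormedSpace.exp ((I * (t : ℂ)) • A)
      = pst_F n * NormedSpace.exp
          (Matrix.diagonal (fun j => I * (t : ℂ) * pst_lam n S j)) * pst_B n := by
    rw [hsmul]
    exact Matrix.exp_units_conj (pst_U n) _
  rw [hconj, Matrix.exp_diagonal, Pi.exp_def, ← Complex.exp_eq_exp_ℂ]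
  rw [Matrix.mul_apply]
  have : ∀ j : ZMod n,
      (pst_F n * Matrix.diagonal fun j => Complex.exp (I * (t : ℂ) * pst_lam n S j)) a j
        * pst_B n j b
      = (n : ℂ)⁻¹ * (Complex.exp (I * t * pst_lam n S j) * pst_e n (j * (a - b))) := by
    intro j
    rw [Matrix.mul_diagonal]
    show pst_e n (a * j) * Complex.exp (I * (t : ℂ) * pst_lam n S j)
        * ((n : ℂ)⁻¹ * pst_e n (-(j * b))) = _
    have he : pst_e n (a * j) * pst_e n (-(j * b)) = pst_e n (j * (a - b)) := by
      rw [← pst_e_add]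
      congr 1
      ring
    calc pst_e n (a * j) * Complex.exp (I * (t : ℂ) * pst_lam n S j)
        * ((n : ℂ)⁻¹ * pst_e n (-(j * b)))
        = (n : ℂ)⁻¹ * (Complex.exp (I * t * pst_lam n S j)
            * (pst_e n (a * j) * pst_e n (-(j * b)))) := by ring
    _ = _ := by rw [he]
  rw [Finset.sum_congr rfl (fun j _ => this j), ← Finset.mul_sum]

end aux3


/-- Let `n` be odd and let `G = G(n;S)` be an integral
circulant graph on `n` vertices with adjacency matrix `A`. Then there are no
vertices `a < b` and no real `t > 0` with `|⟨a| e^{iAt} |b⟩| = 1`: an integral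
circulant graph with an odd number of vertices admits no perfect state
transfer. -/
theorem stmt_17 (n : ℕ) [NeZero n] (hodd : Odd n) (S : Finset ℕ)
    (hS1 : ∀ s ∈ S, 1 ≤ s ∧ s ≤ n - 1)
    (hS2 : ∀ s ∈ S, n - s ∈ S)
    (A : Matrix (ZMod n) (ZMod n) ℂ)
    (hA : ∀ u v : ZMod n, A u v = if (u - v).val ∈ S then 1 else 0)
    (hintegral : ∀ j : ZMod n, ∃ m : ℤ,
      ∑ s ∈ S, Complex.exp (2 * π * I / n) ^ (j.val * s) = m) :
    ¬ ∃ (a b : ZMod n) (t : ℝ), a.val < b.val ∧ 0 < t ∧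
      ‖NormedSpace.exp ((I * (t : ℂ)) • A) a b‖ = 1 := by
  rintro ⟨a, b, t, hab, ht, habs⟩
  have hn1 : 1 ≤ n := Nat.one_le_iff_ne_zero.mpr (NeZero.ne n)
  have hlt : ∀ s ∈ S, s < n := fun s hs => lt_of_le_of_lt (hS1 s hs).2 (by omega)
  have hne : a ≠ b := fun h => by rw [h] at hab; exact lt_irrefl _ hab
  set c : ZMod n := a - b with hc
  have hc0 : c ≠ 0 := sub_ne_zero.mpr hne
  have hnC : (n : ℂ) ≠ 0 := Nat.cast_ne_zero.mpr (NeZero.ne n)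
  have hnR : (0 : ℝ) < n := by exact_mod_cast hn1
  -- integrality of the eigenvalues
  have hlamint : ∀ j : ZMod n, ∃ m : ℤ, pst_lam n S j = m := by
    intro j
    obtain ⟨m, hm⟩ := hintegral j
    refine ⟨m, ?_⟩
    rw [pst_lam, pst_flip n S hS1 hS2 j, ← hm]
    refine Finset.sum_congr rfl (fun s hs => ?_)
    rw [pst_e_mul_cast n (hlt s hs), pst_ω]
  have hlam_abs : ∀ j : ZMod n, ‖Complex.exp (I * t * pst_lam n S j)‖ = 1 := by
    intro j
    obtain ⟨m, hm⟩ := hlamint j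
    rw [hm, Complex.norm_exp]
    have h0 : (I * (t : ℂ) * (m : ℂ)).re = 0 := by simp
    rw [h0, Real.exp_zero]
  have hlam_symm : ∀ j : ZMod n, pst_lam n S (-j) = pst_lam n S j := by
    intro j
    have h1 := pst_flip n S hS1 hS2 j
    rw [pst_lam, pst_lam]
    calc ∑ s ∈ S, pst_e n (-(-j * (s : ZMod n)))
        = ∑ s ∈ S, pst_e n (j * (s : ZMod n)) := by
          refine Finset.sum_congr rfl (fun s _ => ?_)
          congr 1
          ring
      _ = ∑ s ∈ S, pst_e n (-(j * (s : ZMod n))) := h1.symm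
  -- the aligned terms
  set z : ZMod n → ℂ := fun j => Complex.exp (I * t * pst_lam n S j) * pst_e n (j * c)
    with hz
  have hz1 : ∀ j, ‖z j‖ = 1 := by
    intro j
    rw [hz]
    simp only []
    rw [norm_mul, hlam_abs, pst_e_abs, mul_one]
  set w : ℂ := ∑ j : ZMod n, z j with hw
  have habsw : ‖w‖ = n := by
    have hentry := pst_exp_entry n S hS1 A hA t a b
    rw [hentry, ← hc, ← hz, norm_mul, norm_inv, Complex.norm_natCast] at habs
    have := habs
    field_simp at this
    rw [hw]
    exact this
  have hW0 : (starRingEnd ℂ) w ≠ 0 := by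
    intro h
    rw [map_eq_zero] at h
    rw [h, norm_zero] at habsw
    exact (ne_of_lt hnR) habsw
  set W : ℂ := (starRingEnd ℂ) w with hWd
  have hsumre : ∑ j : ZMod n, (W * z j).re = (n : ℝ) ^ 2 := by
    have h1 : ∑ j : ZMod n, W * z j = W * w := by rw [hw, Finset.mul_sum]
    have h2 : (∑ j : ZMod n, (W * z j)).re = ∑ j : ZMod n, (W * z j).re :=
      Complex.re_sum _ _
    rw [← h2, h1, hWd]
    have : (starRingEnd ℂ) w * w = ((‖w‖ ^ 2 : ℝ) : ℂ) := by
      rw [mul_comm, Complex.mul_conj, Complex.normSq_eq_norm_sq]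
    rw [this, habsw]
    norm_cast
  have hle : ∀ j : ZMod n, (W * z j).re ≤ (n : ℝ) := by
    intro j
    calc (W * z j).re ≤ ‖W * z j‖ := Complex.re_le_norm _
      _ = ‖w‖ * 1 := by rw [norm_mul, hWd, Complex.norm_conj, hz1]
      _ = n := by rw [mul_one, habsw]
  have hall : ∀ j : ZMod n, (W * z j).re = n := by
    by_contra hcon
    push_neg at hcon
    obtain ⟨j0, hj0⟩ := hcon
    have hlt' : (W * z j0).re < n := lt_of_le_of_ne (hle j0) hj0
    have hstrict : ∑ j : ZMod n, (W * z j).re < ∑ _j : ZMod n, (n : ℝ) :=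
      Finset.sum_lt_sum (fun j _ => hle j) ⟨j0, Finset.mem_univ _, hlt'⟩
    rw [hsumre, Finset.sum_const, Finset.card_univ, ZMod.card, nsmul_eq_mul] at hstrict
    nlinarith
  have hzeq : ∀ j : ZMod n, W * z j = (n : ℂ) := by
    intro j
    have h1 : ‖W * z j‖ = n := by
      rw [norm_mul, hWd, Complex.norm_conj, hz1, mul_one, habsw]
    have h2 := hall j
    have h3 : (W * z j).im = 0 := by
      have hsq := Complex.sq_norm (W * z j)
      rw [h1, Complex.normSq_apply, h2] at hsq
      nlinarith
    have : W * z j = ((W * z j).re : ℂ) := by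
      rw [Complex.ext_iff]
      constructor
      · simp
      · simp [h3]
    rw [this, h2]
    norm_cast
  have hz11 : z 1 = z (-1) := by
    have := (hzeq 1).trans (hzeq (-1)).symm
    exact mul_left_cancel₀ hW0 this
  have hee : pst_e n c = pst_e n (-c) := by
    rw [hz] at hz11
    simp only [] at hz11
    rw [hlam_symm 1, one_mul] at hz11
    have h4 : (-1 : ZMod n) * c = -c := by ring
    rw [h4] at hz11
    exact mul_left_cancel₀ (Complex.exp_ne_zero _) hz11
  have hsq : pst_ω n ^ (c.val + c.val) = 1 := by
    have : pst_e n c * pst_e n (-c) = 1 := by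
      rw [← pst_e_add, add_neg_cancel, pst_e_zero]
    rw [← hee, pst_e] at this
    rw [pow_add]
    exact this
  have hdvd : n ∣ c.val + c.val := (pst_prim n).pow_eq_one_iff_dvd _ |>.mp hsq
  have hdvd2 : n ∣ 2 * c.val := by
    have : 2 * c.val = c.val + c.val := by ring
    rw [this]; exact hdvd
  have hcop : Nat.Coprime n 2 := Nat.coprime_two_right.mpr hodd
  have hdvd3 : n ∣ c.val := by
    have h2' : n ∣ c.val * 2 := by rwa [mul_comm] at hdvd2
    exact Nat.Coprime.dvd_of_dvd_mul_right hcop h2'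
  have hval : c.val = 0 := Nat.eq_zero_of_dvd_of_lt hdvd3 (ZMod.val_lt c)
  exact hc0 ((ZMod.val_eq_zero c).mp hval)
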